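/- Let ψ be a C² function of (x, t), and let c(x,t) > 0, r(x,t), u(x,t) be smooth with u = ∂ₜr. Set w_F = (∂ₜ − cr²∂ₓ)ψ and w_B = (∂ₜ + cr²∂ₓ)ψ. If ψ satisfies ∂ₜ²ψ − c²r²∂ₓ(r²∂ₓψ) − (2u/r)∂ₜψ + (2u²/r²)ψ = 0, then the pair (w_F/c^{1/2}, w_B/c^{1/2}) satisfies the first-order system: (∂ₜ + cr²∂ₓ)(w_F/c^{1/2}) + ((∂ₜc + cr²∂ₓc)/(2c)) (w_B/c^{1/2}) − (2u/r)(w_F/c^{1/2}) + (2u²/r²)(ψ/c^{1/2}) = 0, and (∂ₜ − cr²∂ₓ)(w_B/c^{1/2}) + ((∂ₜc − cr²∂ₓc)/(2c)) (w_F/c^{1/2}) − (2u/r)(w_B/c^{1/2}) + (2u²/r²)(ψ/c^{1/2}) = 0. -/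

import Mathlib

private lemma derivF_aux (a b C R : ℝ → ℝ) (a' b' C' R' : ℝ) (x : ℝ)
    (ha : HasDerivAt a a' x) (hb : HasDerivAt b b' x)
    (hC : HasDerivAt C C' x) (hR : HasDerivAt R R' x) (hCpos : 0 < C x) :
    deriv (fun y => (a y - C y * (R y)^2 * b y) / Real.sqrt (C y)) x
    = ((a' - ((C' * (R x)^2 + C x * (2 * R x ^ 1 * R')) * b x + C x * (R x)^2 * b'))
          * Real.sqrt (C x)
        - (a x - C x * (R x)^2 * b x) * (C' / (2 * Real.sqrt (C x))))
        / (Real.sqrt (C x))^2 := by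
  have hC0 : C x ≠ 0 := ne_of_gt hCpos
  have hs0 : Real.sqrt (C x) ≠ 0 := Real.sqrt_ne_zero'.mpr hCpos
  exact ((ha.sub (((hC.mul (hR.pow 2)).mul hb))).div (hC.sqrt hC0) hs0).deriv

private lemma derivB_aux (a b C R : ℝ → ℝ) (a' b' C' R' : ℝ) (x : ℝ)
    (ha : HasDerivAt a a' x) (hb : HasDerivAt b b' x)
    (hC : HasDerivAt C C' x) (hR : HasDerivAt R R' x) (hCpos : 0 < C x) :
    deriv (fun y => (a y + C y * (R y)^2 * b y) / Real.sqrt (C y)) x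
    = ((a' + ((C' * (R x)^2 + C x * (2 * R x ^ 1 * R')) * b x + C x * (R x)^2 * b'))
          * Real.sqrt (C x)
        - (a x + C x * (R x)^2 * b x) * (C' / (2 * Real.sqrt (C x))))
        / (Real.sqrt (C x))^2 := by
  have hC0 : C x ≠ 0 := ne_of_gt hCpos
  have hs0 : Real.sqrt (C x) ≠ 0 := Real.sqrt_ne_zero'.mpr hCpos
  exact ((ha.add (((hC.mul (hR.pow 2)).mul hb))).div (hC.sqrt hC0) hs0).deriv


/-- The forward pressure wave `w_F = (∂ₜ − cr²∂ₓ)ψ`. -/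
def wF (ψt ψx c r : ℝ → ℝ → ℝ) : ℝ → ℝ → ℝ :=
  fun x t => ψt x t - c x t * (r x t)^2 * ψx x t

/-- The backward pressure wave `w_B = (∂ₜ + cr²∂ₓ)ψ`. -/
def wB (ψt ψx c r : ℝ → ℝ → ℝ) : ℝ → ℝ → ℝ :=
  fun x t => ψt x t + c x t * (r x t)^2 * ψx x t

/-- The hyperbolic system (5.1)–(5.2) satisfied by `w_F/√c` and `w_B/√c`. -/
theorem pressure_wave_system
    (ψ ψt ψx ψtt ψtx ψxx c ct cx r rx u : ℝ → ℝ → ℝ)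
    (hcpos : ∀ x t, 0 < c x t) (hrpos : ∀ x t, 0 < r x t)
    -- partial derivatives of ψ (including equal mixed partials)
    (hψt : ∀ x t, HasDerivAt (fun τ => ψ x τ) (ψt x t) t)
    (hψx : ∀ x t, HasDerivAt (fun y => ψ y t) (ψx x t) x)
    (hψtt : ∀ x t, HasDerivAt (fun τ => ψt x τ) (ψtt x t) t)
    (hψtx : ∀ x t, HasDerivAt (fun y => ψt y t) (ψtx x t) x)
    (hψxt : ∀ x t, HasDerivAt (fun τ => ψx x τ) (ψtx x t) t)
    (hψxx : ∀ x t, HasDerivAt (fun y => ψx y t) (ψxx x t) x)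
    -- partial derivatives of the coefficients, with u = ∂ₜr
    (hct : ∀ x t, HasDerivAt (fun τ => c x τ) (ct x t) t)
    (hcx : ∀ x t, HasDerivAt (fun y => c y t) (cx x t) x)
    (hrt : ∀ x t, HasDerivAt (fun τ => r x τ) (u x t) t)
    (hrx : ∀ x t, HasDerivAt (fun y => r y t) (rx x t) x)
    -- the equation of ψ:  ∂ₜ²ψ − c²r²∂ₓ(r²∂ₓψ) − (2u/r)∂ₜψ + (2u²/r²)ψ = 0
    (hψeq : ∀ x t,
      ψtt x t - (c x t)^2 * (r x t)^2
          * (2 * r x t * rx x t * ψx x t + (r x t)^2 * ψxx x t)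
        - (2 * u x t / r x t) * ψt x t
        + (2 * (u x t)^2 / (r x t)^2) * ψ x t = 0) :
    ∀ x t,
      (deriv (fun τ => wF ψt ψx c r x τ / Real.sqrt (c x τ)) t
          + c x t * (r x t)^2
            * deriv (fun y => wF ψt ψx c r y t / Real.sqrt (c y t)) x
          + ((ct x t + c x t * (r x t)^2 * cx x t) / (2 * c x t))
            * (wB ψt ψx c r x t / Real.sqrt (c x t))
          - (2 * u x t / r x t) * (wF ψt ψx c r x t / Real.sqrt (c x t))
          + (2 * (u x t)^2 / (r x t)^2) * (ψ x t / Real.sqrt (c x t)) = 0)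
      ∧
      (deriv (fun τ => wB ψt ψx c r x τ / Real.sqrt (c x τ)) t
          - c x t * (r x t)^2
            * deriv (fun y => wB ψt ψx c r y t / Real.sqrt (c y t)) x
          + ((ct x t - c x t * (r x t)^2 * cx x t) / (2 * c x t))
            * (wF ψt ψx c r x t / Real.sqrt (c x t))
          - (2 * u x t / r x t) * (wB ψt ψx c r x t / Real.sqrt (c x t))
          + (2 * (u x t)^2 / (r x t)^2) * (ψ x t / Real.sqrt (c x t)) = 0) := by

  intro x t
  have hF_t := derivF_aux (fun τ => ψt x τ) (fun τ => ψx x τ) (fun τ => c x τ)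
    (fun τ => r x τ) (ψtt x t) (ψtx x t) (ct x t) (u x t) t
    (hψtt x t) (hψxt x t) (hct x t) (hrt x t) (hcpos x t)
  have hF_x := derivF_aux (fun y => ψt y t) (fun y => ψx y t) (fun y => c y t)
    (fun y => r y t) (ψtx x t) (ψxx x t) (cx x t) (rx x t) x
    (hψtx x t) (hψxx x t) (hcx x t) (hrx x t) (hcpos x t)
  have hB_t := derivB_aux (fun τ => ψt x τ) (fun τ => ψx x τ) (fun τ => c x τ)
    (fun τ => r x τ) (ψtt x t) (ψtx x t) (ct x t) (u x t) t
    (hψtt x t) (hψxt x t) (hct x t) (hrt x t) (hcpos x t)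
  have hB_x := derivB_aux (fun y => ψt y t) (fun y => ψx y t) (fun y => c y t)
    (fun y => r y t) (ψtx x t) (ψxx x t) (cx x t) (rx x t) x
    (hψtx x t) (hψxx x t) (hcx x t) (hrx x t) (hcpos x t)
  have hc0 : c x t ≠ 0 := ne_of_gt (hcpos x t)
  have hr0 : r x t ≠ 0 := ne_of_gt (hrpos x t)
  have hs0 : Real.sqrt (c x t) ≠ 0 := Real.sqrt_ne_zero'.mpr (hcpos x t)
  have hs2 : Real.sqrt (c x t) ^ 2 = c x t := Real.sq_sqrt (le_of_lt (hcpos x t))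
  have key := hψeq x t
  constructor
  · simp only [wF, wB]
    rw [hF_t, hF_x]
    beta_reduce
    set s := Real.sqrt (c x t) with hsdef
    rw [← hs2] at key ⊢
    field_simp at key ⊢
    linear_combination (2 * s^2) * key
  · simp only [wF, wB]
    rw [hB_t, hB_x]
    beta_reduce
    set s := Real.sqrt (c x t) with hsdef
    rw [← hs2] at key ⊢
    field_simp at key ⊢
    linear_combination (2 * s^2) * key
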